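/- There exists a constant C > 0 such that for all integers M_x, M_y ≥ 2 and all grid functions v ∈ V_h^0, ‖v‖_∞ ≤ C (‖H_h v‖ + ‖Λ_h v‖). -/

import Mathlib

open Finset

noncomputable section

/-- A grid function on the `(M_x+1) × (M_y+1)` grid, represented as a total function
(only the values at indices `0 ≤ i ≤ M_x`, `0 ≤ j ≤ M_y` are relevant). -/
abbrev GridFn : Type := ℕ → ℕ → ℝ

/-- Spatial stepsize `h_x = 1/M_x`. -/
def hx (Mx : ℕ) : ℝ := ((Mx : ℝ))⁻¹

/-- Spatial stepsize `h_y = 1/M_y`. -/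
def hy (My : ℕ) : ℝ := ((My : ℝ))⁻¹

/-- Second-order difference in the x-direction:
`δ_x² v_{i,j} = (v_{i+1,j} − 2v_{i,j} + v_{i−1,j})/h_x²` (used for `1 ≤ i ≤ M_x−1`). -/
def dxx (Mx : ℕ) (v : GridFn) : GridFn := fun i j =>
  (v (i + 1) j - 2 * v i j + v (i - 1) j) / (hx Mx) ^ 2

/-- Second-order difference in the y-direction. -/
def dyy (My : ℕ) (v : GridFn) : GridFn := fun i j =>
  (v i (j + 1) - 2 * v i j + v i (j - 1)) / (hy My) ^ 2

/-- Compact operator `H_x`: `H_x v_{i,j} = v_{i,j} + (h_x²/12) δ_x² v_{i,j}` for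
`1 ≤ i ≤ M_x−1`, and `H_x v_{i,j} = v_{i,j}` for `i ∈ {0, M_x}`. -/
def Hcx (Mx : ℕ) (v : GridFn) : GridFn := fun i j =>
  if 1 ≤ i ∧ i ≤ Mx - 1 then v i j + (hx Mx) ^ 2 / 12 * dxx Mx v i j else v i j

/-- Compact operator `H_y`. -/
def Hcy (My : ℕ) (v : GridFn) : GridFn := fun i j =>
  if 1 ≤ j ∧ j ≤ My - 1 then v i j + (hy My) ^ 2 / 12 * dyy My v i j else v i j

/-- Compact operator `H_h = H_x H_y`. -/
def Hch (Mx My : ℕ) (v : GridFn) : GridFn := Hcx Mx (Hcy My v)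

/-- `Λ_h v = H_y(δ_x² v) + H_x(δ_y² v)` (at interior indices). -/
def Lamh (Mx My : ℕ) (v : GridFn) : GridFn := fun i j =>
  Hcy My (dxx Mx v) i j + Hcx Mx (dyy My v) i j

/-- Discrete L² inner product
`(v,w) = h_x h_y Σ_{i=1}^{M_x−1} Σ_{j=1}^{M_y−1} v_{i,j} w_{i,j}`. -/
def innp (Mx My : ℕ) (v w : GridFn) : ℝ :=
  hx Mx * hy My * ∑ i ∈ Icc 1 (Mx - 1), ∑ j ∈ Icc 1 (My - 1), v i j * w i j

/-- Discrete L² norm `‖v‖ = (v,v)^{1/2}`. -/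
def nrm (Mx My : ℕ) (v : GridFn) : ℝ := Real.sqrt (innp Mx My v v)

/-- Discrete maximum norm `‖v‖_∞ = max_{1≤i≤M_x−1, 1≤j≤M_y−1} |v_{i,j}|`. -/
def nrmInf (Mx My : ℕ) (v : GridFn) : ℝ :=
  ((Icc 1 (Mx - 1)) ×ˢ (Icc 1 (My - 1))).fold max 0 fun p => |v p.1 p.2|

/-- `‖δ_x v‖_x² = h_x h_y Σ_{i=1}^{M_x} Σ_{j=1}^{M_y−1} (δ_x v_{i−1/2,j})²`. -/
def nrmX2 (Mx My : ℕ) (v : GridFn) : ℝ :=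
  hx Mx * hy My * ∑ i ∈ Icc 1 Mx, ∑ j ∈ Icc 1 (My - 1),
    ((v i j - v (i - 1) j) / hx Mx) ^ 2

/-- `‖δ_y v‖_y² = h_x h_y Σ_{i=1}^{M_x−1} Σ_{j=1}^{M_y} (δ_y v_{i,j−1/2})²`. -/
def nrmY2 (Mx My : ℕ) (v : GridFn) : ℝ :=
  hx Mx * hy My * ∑ i ∈ Icc 1 (Mx - 1), ∑ j ∈ Icc 1 My,
    ((v i j - v i (j - 1)) / hy My) ^ 2

/-- Membership in `V_h^0`: a grid function vanishing on the boundary of the grid. -/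
def BZero (Mx My : ℕ) (v : GridFn) : Prop :=
  ∀ i ≤ Mx, ∀ j ≤ My, (i = 0 ∨ i = Mx ∨ j = 0 ∨ j = My) → v i j = 0

/-- Interior grid indices: `1 ≤ i ≤ M_x−1`, `1 ≤ j ≤ M_y−1`. -/
def interiorIdx (Mx My i j : ℕ) : Prop :=
  1 ≤ i ∧ i ≤ Mx - 1 ∧ 1 ≤ j ∧ j ≤ My - 1

/-- Time average `w̄^{n−1/2} = (w^n + w^{n−1})/2` of a sequence of grid functions. -/
def tbar (u : ℕ → GridFn) (n : ℕ) : GridFn := fun i j => (u n i j + u (n - 1) i j) / 2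

/-- Time difference `δ_t w^{n−1/2} = (w^n − w^{n−1})/τ` of a sequence of grid functions. -/
def tdiff (τ : ℝ) (u : ℕ → GridFn) (n : ℕ) : GridFn := fun i j =>
  (u n i j - u (n - 1) i j) / τ

/-- Extrapolation `l^{*,1} = l⁰`, `l^{*,n} = (3 l^{n−1} − l^{n−2})/2` for `n ≥ 2`. -/
def extrap (u : ℕ → GridFn) (n : ℕ) : GridFn :=
  if n = 1 then u 0 else fun i j => (3 * u (n - 1) i j - u (n - 2) i j) / 2

section Aux
open Finset

lemma icc_insert_left (M : ℕ) (hM : 1 ≤ M) : Icc 1 M = insert 1 (Icc 2 M) := by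
  ext x; simp only [Finset.mem_Icc, Finset.mem_insert]; omega

lemma icc_insert_right (M : ℕ) (hM : 1 ≤ M) : Icc 1 M = insert M (Icc 1 (M-1)) := by
  ext x; simp only [Finset.mem_Icc, Finset.mem_insert]; omega

lemma reindex (M : ℕ) (hM : 1 ≤ M) (f : ℕ → ℝ) :
    ∑ i ∈ Icc 1 (M-1), f (i+1) = ∑ i ∈ Icc 2 M, f i := by
  refine Finset.sum_nbij' (fun i => i + 1) (fun i => i - 1) ?_ ?_ ?_ ?_ ?_
  · intro a ha; simp only [Finset.mem_Icc] at *; omega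
  · intro a ha; simp only [Finset.mem_Icc] at *; omega
  · intro a ha; omega
  · intro a ha; simp only [Finset.mem_Icc] at ha; omega
  · intro a ha; rfl

/-- 1D summation by parts. -/
lemma sbp (M : ℕ) (hM : 1 ≤ M) (u w : ℕ → ℝ) (h0 : w 0 = 0) (hM0 : w M = 0) :
    ∑ i ∈ Icc 1 (M-1), (u (i+1) - 2*u i + u (i-1)) * w i
      = -∑ i ∈ Icc 1 M, (u i - u (i-1)) * (w i - w (i-1)) := by
  have key : ∀ i ∈ Icc 1 (M-1), (u (i+1) - 2*u i + u (i-1)) * w i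
      = (u (i+1) - u i) * w i - (u i - u (i-1)) * w i := fun i _ => by ring
  rw [Finset.sum_congr rfl key, Finset.sum_sub_distrib]
  have r1 : ∑ i ∈ Icc 1 (M-1), (u (i+1) - u i) * w i
      = ∑ i ∈ Icc 2 M, (u i - u (i-1)) * w (i-1) := by
    rw [← reindex M hM (fun i => (u i - u (i-1)) * w (i-1))]
    exact Finset.sum_congr rfl fun i _ => by simp [Nat.add_sub_cancel]
  have e1 : ∑ i ∈ Icc 2 M, (u i - u (i-1)) * w (i-1)
      = ∑ i ∈ Icc 1 M, (u i - u (i-1)) * w (i-1) := by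
    rw [icc_insert_left M hM, Finset.sum_insert (by simp)]
    simp [h0]
  have e2 : ∑ i ∈ Icc 1 (M-1), (u i - u (i-1)) * w i
      = ∑ i ∈ Icc 1 M, (u i - u (i-1)) * w i := by
    rw [icc_insert_right M hM,
      Finset.sum_insert (by simp only [Finset.mem_Icc]; omega)]
    simp [hM0]
  rw [r1, e1, e2, ← Finset.sum_sub_distrib, ← Finset.sum_neg_distrib]
  exact Finset.sum_congr rfl (fun i _ => by ring)

/-- Crude bound for squared second differences. -/
lemma sqB (M : ℕ) (hM : 1 ≤ M) (g : ℕ → ℝ) :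
    ∑ i ∈ Icc 1 (M-1), (g (i+1) - g i)^2 ≤ 4 * ∑ i ∈ Icc 1 M, (g i)^2 := by
  have h1 : ∑ i ∈ Icc 1 (M-1), (g (i+1) - g i)^2
      ≤ ∑ i ∈ Icc 1 (M-1), (2*(g (i+1))^2 + 2*(g i)^2) := by
    refine Finset.sum_le_sum fun i _ => ?_
    nlinarith [sq_nonneg (g (i+1) + g i)]
  have h2 : ∑ i ∈ Icc 1 (M-1), (g (i+1))^2 = ∑ i ∈ Icc 2 M, (g i)^2 :=
    reindex M hM (fun i => (g i)^2)
  have h3 : ∑ i ∈ Icc 2 M, (g i)^2 ≤ ∑ i ∈ Icc 1 M, (g i)^2 :=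
    Finset.sum_le_sum_of_subset_of_nonneg
      (by intro x; simp only [Finset.mem_Icc]; omega) (fun i _ _ => sq_nonneg _)
  have h4 : ∑ i ∈ Icc 1 (M-1), (g i)^2 ≤ ∑ i ∈ Icc 1 M, (g i)^2 :=
    Finset.sum_le_sum_of_subset_of_nonneg
      (by intro x; simp only [Finset.mem_Icc]; omega) (fun i _ _ => sq_nonneg _)
  calc _ ≤ _ := h1
    _ = 2*(∑ i ∈ Icc 1 (M-1), (g (i+1))^2) + 2*(∑ i ∈ Icc 1 (M-1), (g i)^2) := by
        rw [Finset.sum_add_distrib, Finset.mul_sum, Finset.mul_sum]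
    _ ≤ 4 * ∑ i ∈ Icc 1 M, (g i)^2 := by rw [h2]; linarith

lemma tele (f : ℕ → ℝ) (n : ℕ) : ∑ k ∈ Icc 1 n, (f k - f (k-1)) = f n - f 0 := by
  induction n with
  | zero => simp
  | succ n ih => rw [Finset.sum_Icc_succ_top (by omega), ih]; simp

namespace SA

/-- Undivided backward x-difference. -/
def w1 (v : GridFn) : GridFn := fun i j => v i j - v (i-1) j
/-- Undivided backward y-difference. -/
def w2 (v : GridFn) : GridFn := fun i j => v i j - v i (j-1)
/-- Undivided mixed difference. -/
def dd (v : GridFn) : GridFn := fun i j => v i j - v (i-1) j - v i (j-1) + v (i-1) (j-1)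
/-- Undivided second x-difference. -/
def aa (v : GridFn) : GridFn := fun i j => v (i+1) j - 2*v i j + v (i-1) j
/-- Undivided second y-difference. -/
def bb (v : GridFn) : GridFn := fun i j => v i (j+1) - 2*v i j + v i (j-1)
/-- Undivided mixed fourth difference. -/
def cc (v : GridFn) : GridFn := fun i j => aa v i (j+1) - 2*aa v i j + aa v i (j-1)

end SA

lemma lamh_eq (Mx My : ℕ) (hMx : 2 ≤ Mx) (hMy : 2 ≤ My) (v : GridFn) (i j : ℕ)
    (hi1 : 1 ≤ i) (hi2 : i ≤ Mx - 1) (hj1 : 1 ≤ j) (hj2 : j ≤ My - 1) :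
    Lamh Mx My v i j
      = (Mx:ℝ)^2 * (SA.aa v i j + SA.cc v i j / 12)
        + (My:ℝ)^2 * (SA.bb v i j + SA.cc v i j / 12) := by
  have hx0 : (Mx:ℝ) ≠ 0 := Nat.cast_ne_zero.mpr (by omega)
  have hy0 : (My:ℝ) ≠ 0 := Nat.cast_ne_zero.mpr (by omega)
  simp only [Lamh, Hcy, Hcx]
  rw [if_pos ⟨hj1, hj2⟩, if_pos ⟨hi1, hi2⟩]
  simp only [dxx, dyy, hx, hy, SA.aa, SA.bb, SA.cc]
  field_simp
  ring

end Aux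

set_option maxHeartbeats 1000000 in
theorem stmt7 :
    ∃ C > (0:ℝ), ∀ Mx My : ℕ, 2 ≤ Mx → 2 ≤ My → ∀ v : GridFn, BZero Mx My v →
      nrmInf Mx My v ≤ C * (nrm Mx My (Hch Mx My v) + nrm Mx My (Lamh Mx My v)) := by
  refine ⟨2, by norm_num, ?_⟩
  intro Mx My hMx hMy v hv
  set I := Icc 1 (Mx - 1) with hI
  set J := Icc 1 (My - 1) with hJ
  set Kx := Icc 1 Mx with hKx
  set Ky := Icc 1 My with hKy
  set S := ∑ i ∈ Kx, ∑ j ∈ Ky, (SA.dd v i j)^2 with hS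
  have hS0 : 0 ≤ S := Finset.sum_nonneg fun i _ => Finset.sum_nonneg fun j _ => sq_nonneg _
  -- boundary facts
  have hbb0 : ∀ j, 1 ≤ j → j ≤ My - 1 → SA.bb v 0 j = 0 := by
    intro j h1 h2
    simp only [SA.bb]
    rw [hv 0 (by omega) (j+1) (by omega) (Or.inl rfl), hv 0 (by omega) j (by omega) (Or.inl rfl),
      hv 0 (by omega) (j-1) (by omega) (Or.inl rfl)]
    ring
  have hbbM : ∀ j, 1 ≤ j → j ≤ My - 1 → SA.bb v Mx j = 0 := by
    intro j h1 h2
    simp only [SA.bb]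
    rw [hv Mx le_rfl (j+1) (by omega) (Or.inr (Or.inl rfl)),
      hv Mx le_rfl j (by omega) (Or.inr (Or.inl rfl)),
      hv Mx le_rfl (j-1) (by omega) (Or.inr (Or.inl rfl))]
    ring
  have haa0 : ∀ i, 1 ≤ i → i ≤ Mx - 1 → SA.aa v i 0 = 0 := by
    intro i h1 h2
    simp only [SA.aa]
    rw [hv (i+1) (by omega) 0 (by omega) (by omega), hv i (by omega) 0 (by omega) (by omega),
      hv (i-1) (by omega) 0 (by omega) (by omega)]
    ring
  have haaM : ∀ i, 1 ≤ i → i ≤ Mx - 1 → SA.aa v i My = 0 := by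
    intro i h1 h2
    simp only [SA.aa]
    rw [hv (i+1) (by omega) My (by omega) (by omega), hv i (by omega) My (by omega) (by omega),
      hv (i-1) (by omega) My (by omega) (by omega)]
    ring
  have hw10 : ∀ i, i ≤ Mx → SA.w1 v i 0 = 0 := by
    intro i h1
    simp only [SA.w1]
    rw [hv i h1 0 (by omega) (by omega), hv (i-1) (by omega) 0 (by omega) (by omega)]
    ring
  have hw1M : ∀ i, i ≤ Mx → SA.w1 v i My = 0 := by
    intro i h1
    simp only [SA.w1]
    rw [hv i h1 My (by omega) (by omega), hv (i-1) (by omega) My (by omega) (by omega)]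
    ring
  -- Term 1 : ∑∑ aa * bb = S
  have hT1 : ∑ i ∈ I, ∑ j ∈ J, SA.aa v i j * SA.bb v i j = S := by
    rw [Finset.sum_comm]
    have st1 : ∀ j ∈ J, ∑ i ∈ I, SA.aa v i j * SA.bb v i j
        = -∑ i ∈ Kx, (v i j - v (i-1) j) * (SA.bb v i j - SA.bb v (i-1) j) := by
      intro j hj
      rw [hJ, Finset.mem_Icc] at hj
      have h := sbp Mx (by omega) (fun i => v i j) (fun i => SA.bb v i j)
        (hbb0 j hj.1 hj.2) (hbbM j hj.1 hj.2)
      rw [← h]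
      exact Finset.sum_congr rfl fun i _ => by simp only [SA.aa, SA.bb]
    rw [Finset.sum_congr rfl st1]
    have st2 : ∀ j ∈ J, ∑ i ∈ Kx, (v i j - v (i-1) j) * (SA.bb v i j - SA.bb v (i-1) j)
        = ∑ i ∈ Kx, (SA.w1 v i (j+1) - 2*SA.w1 v i j + SA.w1 v i (j-1)) * SA.w1 v i j := by
      intro j _
      exact Finset.sum_congr rfl fun i _ => by simp only [SA.bb, SA.w1]; ring
    have st2' : ∑ j ∈ J, -∑ i ∈ Kx, (v i j - v (i-1) j) * (SA.bb v i j - SA.bb v (i-1) j)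
        = -∑ j ∈ J, ∑ i ∈ Kx,
            (SA.w1 v i (j+1) - 2*SA.w1 v i j + SA.w1 v i (j-1)) * SA.w1 v i j := by
      rw [← Finset.sum_neg_distrib]
      exact Finset.sum_congr rfl fun j hj => by rw [st2 j hj]
    rw [st2', Finset.sum_comm]
    have st3 : ∀ i ∈ Kx, ∑ j ∈ J,
        (SA.w1 v i (j+1) - 2*SA.w1 v i j + SA.w1 v i (j-1)) * SA.w1 v i j
        = -∑ j ∈ Ky, (SA.dd v i j)^2 := by
      intro i hi
      rw [hKx, Finset.mem_Icc] at hi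
      have h := sbp My (by omega) (fun j => SA.w1 v i j) (fun j => SA.w1 v i j)
        (hw10 i hi.2) (hw1M i hi.2)
      rw [hJ, h]
      congr 1
      exact Finset.sum_congr rfl fun j _ => by simp only [SA.w1, SA.dd]; ring
    rw [Finset.sum_congr rfl st3]
    simp only [Finset.sum_neg_distrib, neg_neg, hS]
  -- Term 2 : ∑∑ cc * bb ≥ -4S
  have hT2 : -(4*S) ≤ ∑ i ∈ I, ∑ j ∈ J, SA.cc v i j * SA.bb v i j := by
    rw [Finset.sum_comm]
    have st1 : ∀ j ∈ J, ∑ i ∈ I, SA.cc v i j * SA.bb v i j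
        = -∑ i ∈ Kx, (SA.dd v i (j+1) - SA.dd v i j)^2 := by
      intro j hj
      rw [hJ, Finset.mem_Icc] at hj
      have h := sbp Mx (by omega) (fun i => SA.bb v i j) (fun i => SA.bb v i j)
        (hbb0 j hj.1 hj.2) (hbbM j hj.1 hj.2)
      have e : ∑ i ∈ I, SA.cc v i j * SA.bb v i j
          = ∑ i ∈ Icc 1 (Mx-1), (SA.bb v (i+1) j - 2*SA.bb v i j + SA.bb v (i-1) j)
              * SA.bb v i j := by
        rw [hI]
        exact Finset.sum_congr rfl fun i _ => by simp only [SA.cc, SA.aa, SA.bb]; ring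
      rw [e, h]
      congr 1
      refine Finset.sum_congr rfl fun i _ => ?_
      simp only [SA.bb, SA.dd, SA.w1, Nat.add_sub_cancel]
      ring
    rw [Finset.sum_congr rfl st1, Finset.sum_neg_distrib]
    have st3 : ∑ j ∈ J, ∑ i ∈ Kx, (SA.dd v i (j+1) - SA.dd v i j)^2 ≤ 4*S := by
      rw [Finset.sum_comm]
      calc ∑ i ∈ Kx, ∑ j ∈ J, (SA.dd v i (j+1) - SA.dd v i j)^2
          ≤ ∑ i ∈ Kx, 4*∑ j ∈ Ky, (SA.dd v i j)^2 :=
            Finset.sum_le_sum fun i _ => sqB My (by omega) (fun j => SA.dd v i j)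
        _ = 4*S := by rw [hS, Finset.mul_sum]
    linarith
  -- Term 3 : ∑∑ aa * cc ≥ -4S
  have hT3 : -(4*S) ≤ ∑ i ∈ I, ∑ j ∈ J, SA.aa v i j * SA.cc v i j := by
    have st1 : ∀ i ∈ I, ∑ j ∈ J, SA.aa v i j * SA.cc v i j
        = -∑ j ∈ Ky, (SA.dd v (i+1) j - SA.dd v i j)^2 := by
      intro i hi
      rw [hI, Finset.mem_Icc] at hi
      have h := sbp My (by omega) (fun j => SA.aa v i j) (fun j => SA.aa v i j)
        (haa0 i hi.1 hi.2) (haaM i hi.1 hi.2)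
      have e : ∑ j ∈ J, SA.aa v i j * SA.cc v i j
          = ∑ j ∈ Icc 1 (My-1), (SA.aa v i (j+1) - 2*SA.aa v i j + SA.aa v i (j-1))
              * SA.aa v i j := by
        rw [hJ]
        exact Finset.sum_congr rfl fun j _ => by simp only [SA.cc]; ring
      rw [e, h]
      congr 1
      refine Finset.sum_congr rfl fun j _ => ?_
      simp only [SA.aa, SA.dd, Nat.add_sub_cancel]
      ring
    rw [Finset.sum_congr rfl st1, Finset.sum_neg_distrib]
    have st3 : ∑ i ∈ I, ∑ j ∈ Ky, (SA.dd v (i+1) j - SA.dd v i j)^2 ≤ 4*S := by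
      rw [Finset.sum_comm]
      have : ∀ j ∈ Ky, ∑ i ∈ I, (SA.dd v (i+1) j - SA.dd v i j)^2
          ≤ 4*∑ i ∈ Kx, (SA.dd v i j)^2 := fun j _ =>
        sqB Mx (by omega) (fun i => SA.dd v i j)
      calc ∑ j ∈ Ky, ∑ i ∈ I, (SA.dd v (i+1) j - SA.dd v i j)^2
          ≤ ∑ j ∈ Ky, 4*∑ i ∈ Kx, (SA.dd v i j)^2 := Finset.sum_le_sum this
        _ = 4*S := by simp only [← Finset.mul_sum]; rw [hS, Finset.sum_comm]
    linarith
  -- Term 4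
  have hT4 : (0:ℝ) ≤ ∑ i ∈ I, ∑ j ∈ J, SA.cc v i j * SA.cc v i j :=
    Finset.sum_nonneg fun i _ => Finset.sum_nonneg fun j _ => mul_self_nonneg _
  -- combination
  have hPQ : (1/3)*S ≤ ∑ i ∈ I, ∑ j ∈ J,
      (SA.aa v i j + SA.cc v i j / 12) * (SA.bb v i j + SA.cc v i j / 12) := by
    have expand : ∑ i ∈ I, ∑ j ∈ J,
        (SA.aa v i j + SA.cc v i j / 12) * (SA.bb v i j + SA.cc v i j / 12)
        = (∑ i ∈ I, ∑ j ∈ J, SA.aa v i j * SA.bb v i j)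
          + (1/12)*(∑ i ∈ I, ∑ j ∈ J, SA.aa v i j * SA.cc v i j)
          + (1/12)*(∑ i ∈ I, ∑ j ∈ J, SA.cc v i j * SA.bb v i j)
          + (1/144)*(∑ i ∈ I, ∑ j ∈ J, SA.cc v i j * SA.cc v i j) := by
      simp only [Finset.mul_sum, ← Finset.sum_add_distrib]
      exact Finset.sum_congr rfl fun i _ => Finset.sum_congr rfl fun j _ => by ring
    rw [expand, hT1]
    linarith
  -- lower bound for ∑∑ (Λ v)²
  have hL2 : (2/3)*((Mx:ℝ)^2*(My:ℝ)^2*S)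
      ≤ ∑ i ∈ I, ∑ j ∈ J, Lamh Mx My v i j * Lamh Mx My v i j := by
    have per : ∀ i ∈ I, ∀ j ∈ J,
        2*((Mx:ℝ)^2*(My:ℝ)^2)*((SA.aa v i j + SA.cc v i j / 12)
            * (SA.bb v i j + SA.cc v i j / 12))
          ≤ Lamh Mx My v i j * Lamh Mx My v i j := by
      intro i hi j hj
      rw [hI, Finset.mem_Icc] at hi
      rw [hJ, Finset.mem_Icc] at hj
      rw [lamh_eq Mx My hMx hMy v i j hi.1 hi.2 hj.1 hj.2]
      nlinarith [sq_nonneg ((Mx:ℝ)^2*(SA.aa v i j + SA.cc v i j / 12)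
        - (My:ℝ)^2*(SA.bb v i j + SA.cc v i j / 12))]
    have hXY : (0:ℝ) ≤ 2*((Mx:ℝ)^2*(My:ℝ)^2) := by positivity
    calc (2/3)*((Mx:ℝ)^2*(My:ℝ)^2*S)
        = 2*((Mx:ℝ)^2*(My:ℝ)^2)*((1/3)*S) := by ring
      _ ≤ 2*((Mx:ℝ)^2*(My:ℝ)^2)*(∑ i ∈ I, ∑ j ∈ J,
            (SA.aa v i j + SA.cc v i j / 12) * (SA.bb v i j + SA.cc v i j / 12)) :=
          mul_le_mul_of_nonneg_left hPQ hXY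
      _ = ∑ i ∈ I, ∑ j ∈ J, 2*((Mx:ℝ)^2*(My:ℝ)^2)*((SA.aa v i j + SA.cc v i j / 12)
            * (SA.bb v i j + SA.cc v i j / 12)) := by
          simp only [Finset.mul_sum]
      _ ≤ _ := Finset.sum_le_sum fun i hi => Finset.sum_le_sum fun j hj => per i hi j hj
  -- lower bound for innp of Λ v
  have hInn : (2/3)*((Mx:ℝ)*(My:ℝ))*S
      ≤ innp Mx My (Lamh Mx My v) (Lamh Mx My v) := by
    have hx0 : (Mx:ℝ) ≠ 0 := Nat.cast_ne_zero.mpr (by omega)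
    have hy0 : (My:ℝ) ≠ 0 := Nat.cast_ne_zero.mpr (by omega)
    have h := mul_le_mul_of_nonneg_left hL2
      (show (0:ℝ) ≤ (Mx:ℝ)⁻¹*(My:ℝ)⁻¹ by positivity)
    calc (2/3)*((Mx:ℝ)*(My:ℝ))*S
        = ((Mx:ℝ)⁻¹*(My:ℝ)⁻¹)*((2/3)*((Mx:ℝ)^2*(My:ℝ)^2*S)) := by
          field_simp
      _ ≤ ((Mx:ℝ)⁻¹*(My:ℝ)⁻¹)*(∑ i ∈ I, ∑ j ∈ J,
            Lamh Mx My v i j * Lamh Mx My v i j) := h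
      _ = innp Mx My (Lamh Mx My v) (Lamh Mx My v) := by
          simp only [innp, hx, hy, hI, hJ]
          try ring
  have hInn0 : 0 ≤ innp Mx My (Lamh Mx My v) (Lamh Mx My v) := by
    have : (0:ℝ) ≤ (2/3)*((Mx:ℝ)*(My:ℝ))*S := by positivity
    linarith
  -- pointwise bound
  have hpt : ∀ i ∈ I, ∀ j ∈ J, (v i j)^2 ≤ (Mx:ℝ)*(My:ℝ)*S := by
    intro i hi j hj
    rw [hI, Finset.mem_Icc] at hi
    rw [hJ, Finset.mem_Icc] at hj
    have inner : ∀ k, k ≤ Mx → ∑ l ∈ Icc 1 j, SA.dd v k l = SA.w1 v k j := by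
      intro k hk
      have t : ∑ l ∈ Icc 1 j, (SA.w1 v k l - SA.w1 v k (l-1))
          = SA.w1 v k j - SA.w1 v k 0 := tele (fun l => SA.w1 v k l) j
      rw [hw10 k hk, sub_zero] at t
      rw [← t]
      exact Finset.sum_congr rfl fun l _ => by simp only [SA.dd, SA.w1]; ring
    have rep : v i j = ∑ k ∈ Icc 1 i, ∑ l ∈ Icc 1 j, SA.dd v k l := by
      rw [Finset.sum_congr rfl (fun k hk => inner k (by
        rw [Finset.mem_Icc] at hk; omega))]
      have t2 : ∑ k ∈ Icc 1 i, ((fun k => v k j) k - (fun k => v k j) (k-1))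
          = v i j - v 0 j := tele (fun k => v k j) i
      rw [hv 0 (by omega) j (by omega) (Or.inl rfl), sub_zero] at t2
      rw [← t2]
      exact Finset.sum_congr rfl fun k _ => by simp only [SA.w1]
    have h1 : |v i j| ≤ ∑ k ∈ Kx, ∑ l ∈ Ky, |SA.dd v k l| := by
      rw [rep]
      calc |∑ k ∈ Icc 1 i, ∑ l ∈ Icc 1 j, SA.dd v k l|
          ≤ ∑ k ∈ Icc 1 i, |∑ l ∈ Icc 1 j, SA.dd v k l| :=
            Finset.abs_sum_le_sum_abs _ _
        _ ≤ ∑ k ∈ Icc 1 i, ∑ l ∈ Icc 1 j, |SA.dd v k l| :=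
            Finset.sum_le_sum fun k _ => Finset.abs_sum_le_sum_abs _ _
        _ ≤ ∑ k ∈ Icc 1 i, ∑ l ∈ Ky, |SA.dd v k l| :=
            Finset.sum_le_sum fun k _ => Finset.sum_le_sum_of_subset_of_nonneg
              (Finset.Icc_subset_Icc le_rfl (by omega)) (fun _ _ _ => abs_nonneg _)
        _ ≤ ∑ k ∈ Kx, ∑ l ∈ Ky, |SA.dd v k l| :=
            Finset.sum_le_sum_of_subset_of_nonneg
              (Finset.Icc_subset_Icc le_rfl (by omega))
              (fun _ _ _ => Finset.sum_nonneg fun _ _ => abs_nonneg _)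
    have h2 : (∑ k ∈ Kx, ∑ l ∈ Ky, |SA.dd v k l|)^2 ≤ (Mx:ℝ)*(My:ℝ)*S := by
      have cs := Finset.sum_mul_sq_le_sq_mul_sq (Kx ×ˢ Ky)
        (fun p => |SA.dd v p.1 p.2|) (fun _ => (1:ℝ))
      simp only [mul_one, one_pow] at cs
      rw [Finset.sum_product] at cs
      have e1 : ∑ p ∈ Kx ×ˢ Ky, |SA.dd v p.1 p.2|^2 = S := by
        rw [Finset.sum_product]
        exact Finset.sum_congr rfl fun k _ => Finset.sum_congr rfl fun l _ => sq_abs _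
      have e2 : ∑ _p ∈ Kx ×ˢ Ky, (1:ℝ) = (Mx:ℝ)*(My:ℝ) := by
        rw [Finset.sum_const, Finset.card_product, hKx, hKy, Nat.card_Icc, Nat.card_Icc]
        simp only [Nat.add_sub_cancel, nsmul_eq_mul]
        push_cast
        ring
      rw [e1, e2] at cs
      calc (∑ k ∈ Kx, ∑ l ∈ Ky, |SA.dd v k l|)^2 ≤ S * ((Mx:ℝ)*(My:ℝ)) := cs
        _ = (Mx:ℝ)*(My:ℝ)*S := by ring
    calc (v i j)^2 = |v i j|^2 := (sq_abs _).symm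
      _ ≤ (∑ k ∈ Kx, ∑ l ∈ Ky, |SA.dd v k l|)^2 :=
          pow_le_pow_left₀ (abs_nonneg _) h1 2
      _ ≤ (Mx:ℝ)*(My:ℝ)*S := h2
  -- final assembly
  have hnrmH : 0 ≤ nrm Mx My (Hch Mx My v) := Real.sqrt_nonneg _
  have hnrmL : 0 ≤ nrm Mx My (Lamh Mx My v) := Real.sqrt_nonneg _
  rw [nrmInf, Finset.fold_max_le]
  constructor
  · linarith
  · rintro ⟨i, j⟩ hp
    rw [Finset.mem_product] at hp
    have hb : (v i j)^2 ≤ (3/2) * innp Mx My (Lamh Mx My v) (Lamh Mx My v) := by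
      have h1 := hpt i hp.1 j hp.2
      linarith
    have h4 : |v i j| ≤ Real.sqrt ((3/2) * innp Mx My (Lamh Mx My v) (Lamh Mx My v)) :=
      Real.abs_le_sqrt hb
    have h5 : Real.sqrt ((3/2) * innp Mx My (Lamh Mx My v) (Lamh Mx My v))
        = Real.sqrt (3/2) * nrm Mx My (Lamh Mx My v) := by
      rw [Real.sqrt_mul (by norm_num)]; rfl
    have h6 : Real.sqrt (3/2) ≤ 2 := by
      have := Real.sqrt_le_sqrt (show (3/2:ℝ) ≤ 4 by norm_num)
      rwa [show (4:ℝ) = 2^2 by norm_num, Real.sqrt_sq (by norm_num)] at this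
    calc |v i j| ≤ Real.sqrt (3/2) * nrm Mx My (Lamh Mx My v) := by rw [← h5]; exact h4
      _ ≤ 2 * nrm Mx My (Lamh Mx My v) := mul_le_mul_of_nonneg_right h6 hnrmL
      _ ≤ 2 * (nrm Mx My (Hch Mx My v) + nrm Mx My (Lamh Mx My v)) := by linarith
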